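/- Suppose P(μ ≠ 0) > 0. Then the function R(τ; G) = E_μ[∫_{−|μ|}^{|μ|} |w|·φ(w−τ) dw] / ∫_{−∞}^{0} |w|·φ(w−τ) dw is strictly increasing in τ on [0, ∞); that is, its derivative with respect to τ is strictly positive for every τ ≥ 0. -/

import Mathlib

open MeasureTheory

/-- Standard Gaussian density `φ(z) = e^{-z²/2}/√(2π)`. -/
noncomputable def gaussPDF (z : ℝ) : ℝ := Real.exp (-z ^ 2 / 2) / Real.sqrt (2 * Real.pi)

/-- Soft-thresholding function `η(x; τ) = sign(x)·max(|x| − τ, 0)`. -/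
noncomputable def softThr (x τ : ℝ) : ℝ := Real.sign x * max (|x| - τ) 0

/-- Soft-thresholding risk `r(τ; G) = E_{μ∼G, Z∼N(0,1)}[(η(μ + Z; τ) − μ)²]`. -/
noncomputable def stRisk (G : Measure ℝ) (τ : ℝ) : ℝ :=
  ∫ m, (∫ z, (softThr (m + z) τ - m) ^ 2 * gaussPDF z) ∂G

/-- The ratio `R(τ; G) = E_μ[∫_{−|μ|}^{|μ|} |w|·φ(w−τ) dw] / ∫_{−∞}^{0} |w|·φ(w−τ) dw`. -/
noncomputable def Rratio (G : Measure ℝ) (τ : ℝ) : ℝ :=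
  (∫ m, (∫ w in (-|m|)..(|m|), |w| * gaussPDF (w - τ)) ∂G) /
    ∫ w in Set.Iio (0 : ℝ), |w| * gaussPDF (w - τ)

open Real Set Filter intervalIntegral Topology


lemma gaussPDF_pos (x : ℝ) : 0 < gaussPDF x :=
  div_pos (Real.exp_pos _) (Real.sqrt_pos.2 (by positivity))

lemma gaussPDF_neg' (x : ℝ) : gaussPDF (-x) = gaussPDF x := by
  simp [gaussPDF, neg_pow]

lemma continuous_gaussPDF : Continuous gaussPDF := by
  unfold gaussPDF; fun_prop

lemma gaussPDF_le_one (x : ℝ) : gaussPDF x ≤ 1 := by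
  unfold gaussPDF
  rw [div_le_one (Real.sqrt_pos.2 (by positivity))]
  calc Real.exp (-x ^ 2 / 2) ≤ 1 := by
        apply Real.exp_le_one_iff.2; nlinarith [sq_nonneg x]
    _ ≤ Real.sqrt (2 * Real.pi) := by
        rw [show (1:ℝ) = Real.sqrt 1 by simp]
        apply Real.sqrt_le_sqrt; nlinarith [Real.pi_gt_three]

lemma gaussPDF_eq (x : ℝ) : gaussPDF x = (Real.sqrt (2*Real.pi))⁻¹ * Real.exp (-(2⁻¹) * x^2) := by
  unfold gaussPDF; rw [div_eq_inv_mul]; ring_nf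

lemma integrable_gaussPDF : Integrable gaussPDF := by
  have := (integrable_exp_neg_mul_sq (by norm_num : (0:ℝ) < 2⁻¹)).const_mul (Real.sqrt (2*Real.pi))⁻¹
  exact this.congr (by filter_upwards with x; rw [gaussPDF_eq])

lemma integrable_mul_gaussPDF : Integrable (fun x => x * gaussPDF x) := by
  have := (integrable_mul_exp_neg_mul_sq (by norm_num : (0:ℝ) < 2⁻¹)).const_mul (Real.sqrt (2*Real.pi))⁻¹
  exact this.congr (by filter_upwards with x; rw [gaussPDF_eq]; ring)

lemma integrable_abs_mul_gaussPDF (τ : ℝ) : Integrable (fun w => |w| * gaussPDF (w - τ)) := by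
  have h1 : Integrable (fun w => |w - τ| * gaussPDF (w - τ) + |τ| * gaussPDF (w - τ)) := by
    apply Integrable.add
    · exact (integrable_mul_gaussPDF.abs.comp_sub_right τ).congr
        (by filter_upwards with x; simp [abs_mul, abs_of_pos (gaussPDF_pos _)])
    · exact (integrable_gaussPDF.comp_sub_right τ).const_mul _
  apply h1.mono' ((continuous_abs.mul (continuous_gaussPDF.comp (by fun_prop))).aestronglyMeasurable)
  filter_upwards with w
  have h2 : |w| ≤ |w - τ| + |τ| := by
    calc |w| = |(w - τ) + τ| := by ring_nf
      _ ≤ |w - τ| + |τ| := abs_add_le _ _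
  have := gaussPDF_pos (w - τ)
  show ‖|w| * gaussPDF (w - τ)‖ ≤ _
  rw [Real.norm_eq_abs, abs_of_nonneg (by positivity)]
  nlinarith [abs_nonneg w, abs_nonneg (w-τ), abs_nonneg τ]

lemma hasDerivAt_gaussPDF (x : ℝ) : HasDerivAt gaussPDF (-x * gaussPDF x) x := by
  have h : HasDerivAt (fun x : ℝ => Real.exp (-x ^ 2 / 2) / Real.sqrt (2 * Real.pi))
      (Real.exp (-x^2/2) * (-x) / Real.sqrt (2*Real.pi)) x := by
    have h1 : HasDerivAt (fun x : ℝ => -x ^ 2 / 2) (-x) x := by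
      have := ((hasDerivAt_pow 2 x).neg).div_const 2
      simpa using this.congr_deriv (by ring)
    exact ((h1.exp)).div_const _
  exact h.congr_deriv (by unfold gaussPDF; ring)


noncomputable def Phi0 (x : ℝ) : ℝ := ∫ t in (0:ℝ)..x, gaussPDF t

lemma hasDerivAt_Phi0 (x : ℝ) : HasDerivAt Phi0 (gaussPDF x) x :=
  intervalIntegral.integral_hasDerivAt_right
    (continuous_gaussPDF.intervalIntegrable _ _)
    (continuous_gaussPDF.stronglyMeasurableAtFilter _ _)
    continuous_gaussPDF.continuousAt

lemma continuous_Phi0 : Continuous Phi0 := by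
  have : Differentiable ℝ Phi0 := fun x => (hasDerivAt_Phi0 x).differentiableAt
  exact this.continuous

lemma abs_Phi0_le (x : ℝ) : |Phi0 x| ≤ ∫ t, gaussPDF t := by
  rcases le_total 0 x with h | h
  · rw [abs_of_nonneg (by
      apply intervalIntegral.integral_nonneg h (fun t _ => (gaussPDF_pos t).le))]
    rw [Phi0, intervalIntegral.integral_of_le h]
    exact setIntegral_le_integral integrable_gaussPDF
      (by filter_upwards with t using (gaussPDF_pos t).le)
  · rw [Phi0, intervalIntegral.integral_symm, abs_neg,
      abs_of_nonneg (intervalIntegral.integral_nonneg h (fun t _ => (gaussPDF_pos t).le)),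
      intervalIntegral.integral_of_le h]
    exact setIntegral_le_integral integrable_gaussPDF
      (by filter_upwards with t using (gaussPDF_pos t).le)

noncomputable def Kc : ℝ := ∫ x in Ioi (0:ℝ), gaussPDF x

lemma tendsto_Phi0_atTop : Tendsto Phi0 atTop (𝓝 Kc) := by
  have := intervalIntegral_tendsto_integral_Ioi (0:ℝ)
    (integrable_gaussPDF.integrableOn) tendsto_id
  exact this

lemma Jc_eq : (∫ x in Iic (0:ℝ), gaussPDF x) = Kc := by
  rw [show Kc = ∫ x in Ioi (0:ℝ), gaussPDF (-x) from by
    apply setIntegral_congr_fun measurableSet_Ioi (fun x _ => (gaussPDF_neg' x).symm),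
    integral_comp_neg_Ioi]
  norm_num

lemma tendsto_Phi0_atBot : Tendsto Phi0 atBot (𝓝 (-Kc)) := by
  have h := intervalIntegral_tendsto_integral_Iic (0:ℝ)
    (integrable_gaussPDF.integrableOn) tendsto_id
  rw [Jc_eq] at h
  have : Phi0 = fun x => -∫ t in x..(0:ℝ), gaussPDF t := by
    funext x; rw [Phi0, intervalIntegral.integral_symm]
  rw [this]
  exact h.neg

noncomputable def Cc (τ : ℝ) : ℝ := Kc - Phi0 τ

lemma hasDerivAt_Cc (τ : ℝ) : HasDerivAt Cc (-gaussPDF τ) τ := by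
  exact ((hasDerivAt_Phi0 τ).const_sub Kc)

lemma Cc_eq (τ : ℝ) : Cc τ = ∫ x in Ioi τ, gaussPDF x := by
  have := integral_Ioi_of_hasDerivAt_of_tendsto' (f := Phi0) (f' := gaussPDF) (a := τ)
    (fun x _ => hasDerivAt_Phi0 x) (integrable_gaussPDF.integrableOn) tendsto_Phi0_atTop
  rw [this]; rfl

lemma Cc_pos (τ : ℝ) : 0 < Cc τ := by
  rw [Cc_eq]
  apply (setIntegral_pos_iff_support_of_nonneg_ae _ _).2
  · have : (Function.support gaussPDF) = univ := by
      ext x; simp [Function.support, (gaussPDF_pos x).ne']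
    rw [this]; simpa using measure_Ioi_pos (volume) τ
  · filter_upwards with x using (gaussPDF_pos x).le
  · exact integrable_gaussPDF.integrableOn

lemma tendsto_gaussPDF_atTop : Tendsto gaussPDF atTop (𝓝 0) := by
  have h1 : Tendsto (fun x : ℝ => -x^2/2) atTop atBot := by
    apply Filter.Tendsto.atBot_div_const (by norm_num : (0:ℝ) < 2)
    exact tendsto_neg_atBot_iff.2 (tendsto_pow_atTop (by norm_num))
  have h2 : Tendsto (fun x : ℝ => Real.exp (-x^2/2)) atTop (𝓝 0) :=
    Real.tendsto_exp_atBot.comp h1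
  have h3 := h2.div_const (Real.sqrt (2*Real.pi))
  rw [zero_div] at h3
  exact h3

-- integral of u * gaussPDF u over Ioi τ
lemma integral_Ioi_mul_gaussPDF (τ : ℝ) : (∫ u in Ioi τ, u * gaussPDF u) = gaussPDF τ := by
  have := integral_Ioi_of_hasDerivAt_of_tendsto' (f := fun u => -gaussPDF u)
    (f' := fun u => u * gaussPDF u) (a := τ)
    (fun x _ => by simpa [Pi.neg_def] using (hasDerivAt_gaussPDF x).neg.congr_deriv (by ring))
    (integrable_mul_gaussPDF.integrableOn) (tendsto_gaussPDF_atTop.neg.congr (by simp))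
  rw [this]; ring


lemma Phi0_neg (x : ℝ) : Phi0 (-x) = -Phi0 x := by
  have : Phi0 (-x) = ∫ t in (0:ℝ)..(-x), gaussPDF (-t) := by
    rw [Phi0]; congr 1; funext t; rw [gaussPDF_neg']
  rw [this, intervalIntegral.integral_comp_neg, neg_zero, neg_neg,
    intervalIntegral.integral_symm, Phi0]

lemma tendsto_gaussPDF_atBot : Tendsto gaussPDF atBot (𝓝 0) := by
  have h := tendsto_gaussPDF_atTop.comp tendsto_neg_atBot_atTop
  exact h.congr (fun x => gaussPDF_neg' x)

lemma hasDerivAt_gauss_shift (τ w : ℝ) :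
    HasDerivAt (fun w => gaussPDF (w - τ)) (-(w - τ) * gaussPDF (w - τ)) w := by
  have := (hasDerivAt_gaussPDF (w - τ)).comp w ((hasDerivAt_id w).sub_const τ)
  simpa [Function.comp_def] using this

lemma hasDerivAt_Phi0_shift (τ w : ℝ) :
    HasDerivAt (fun w => Phi0 (w - τ)) (gaussPDF (w - τ)) w := by
  have := (hasDerivAt_Phi0 (w - τ)).comp w ((hasDerivAt_id w).sub_const τ)
  simpa [Function.comp_def] using this

lemma integrable_neg_mul_gauss_shift (τ : ℝ) :
    Integrable (fun w => -w * gaussPDF (w - τ)) := by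
  apply (integrable_abs_mul_gaussPDF τ).mono'
  · exact ((continuous_id.neg).mul (continuous_gaussPDF.comp (by fun_prop))).aestronglyMeasurable
  · filter_upwards with w
    rw [Real.norm_eq_abs, abs_mul, abs_neg, abs_of_pos (gaussPDF_pos _)]

noncomputable def Dfun (τ : ℝ) : ℝ := gaussPDF τ - τ * Cc τ

lemma D_eq (τ : ℝ) : (∫ w in Iio (0:ℝ), |w| * gaussPDF (w - τ)) = Dfun τ := by
  rw [← integral_Iic_eq_integral_Iio]
  have hcongr : ∀ w ∈ Iic (0:ℝ), |w| * gaussPDF (w - τ) = -w * gaussPDF (w - τ) := by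
    intro w hw; rw [abs_of_nonpos hw]
  rw [setIntegral_congr_fun measurableSet_Iic hcongr]
  have hderiv : ∀ w ∈ Iic (0:ℝ),
      HasDerivAt (fun w => gaussPDF (w - τ) - τ * Phi0 (w - τ)) (-w * gaussPDF (w - τ)) w := by
    intro w _
    have := (hasDerivAt_gauss_shift τ w).sub ((hasDerivAt_Phi0_shift τ w).const_mul τ)
    exact this.congr_deriv (by ring)
  have htend : Tendsto (fun w => gaussPDF (w - τ) - τ * Phi0 (w - τ)) atBot (𝓝 (τ * Kc)) := by
    have h1 : Tendsto (fun w : ℝ => w - τ) atBot atBot := tendsto_atBot_add_const_right _ _ tendsto_id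
    have h2 := (tendsto_gaussPDF_atBot.comp h1).sub ((tendsto_Phi0_atBot.comp h1).const_mul τ)
    simpa using h2.congr (fun x => by simp [Function.comp])
  rw [integral_Iic_of_hasDerivAt_of_tendsto' hderiv
    ((integrable_neg_mul_gauss_shift τ).integrableOn) htend]
  have : (0:ℝ) - τ = -τ := by ring
  rw [this, gaussPDF_neg', Phi0_neg, Dfun, Cc]
  ring

lemma Dfun_pos (τ : ℝ) : 0 < Dfun τ := by
  rw [← D_eq]
  apply (setIntegral_pos_iff_support_of_nonneg_ae _ _).2
  · have h2 : (Function.support fun w => |w| * gaussPDF (w - τ)) ∩ Iio 0 = Iio 0 := by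
      ext w
      simp only [mem_inter_iff, Function.mem_support, mem_Iio]
      constructor
      · rintro ⟨_, h2⟩; exact h2
      · intro h1
        refine ⟨?_, h1⟩
        have hg := gaussPDF_pos (w - τ)
        have ha : |w| > 0 := abs_pos.2 (ne_of_lt h1)
        positivity
    rw [h2]
    simp
  · filter_upwards with w
    have := gaussPDF_pos (w - τ); positivity
  · exact (integrable_abs_mul_gaussPDF τ).integrableOn

lemma hasDerivAt_Dfun (τ : ℝ) : HasDerivAt Dfun (-Cc τ) τ := by
  have := (hasDerivAt_gaussPDF τ).sub ((hasDerivAt_id τ).mul (hasDerivAt_Cc τ))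
  exact this.congr_deriv (by rw [Cc]; simp only [id_eq]; ring)

lemma Cc_le (τ : ℝ) (hτ : 0 < τ) : Cc τ ≤ gaussPDF τ / τ := by
  rw [Cc_eq]
  have h1 : (∫ x in Ioi τ, gaussPDF x) ≤ ∫ x in Ioi τ, (x / τ) * gaussPDF x := by
    apply setIntegral_mono_on
    · exact integrable_gaussPDF.integrableOn
    · exact ((integrable_mul_gaussPDF.div_const τ).integrableOn).congr
        (ae_of_all _ (fun x => by ring))
    · exact measurableSet_Ioi
    · intro x hx
      have hx1 : 1 ≤ x / τ := (one_le_div hτ).2 (le_of_lt hx)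
      nlinarith [gaussPDF_pos x]
  calc (∫ x in Ioi τ, gaussPDF x) ≤ ∫ x in Ioi τ, (x / τ) * gaussPDF x := h1
    _ = (∫ x in Ioi τ, x * gaussPDF x) / τ := by
        rw [← MeasureTheory.integral_div]; congr 1; funext x; ring
    _ = gaussPDF τ / τ := by rw [integral_Ioi_mul_gaussPDF]

noncomputable def Wm (τ : ℝ) : ℝ := Cc τ - τ * Dfun τ

lemma hasDerivAt_Wm (τ : ℝ) : HasDerivAt Wm (-2 * Dfun τ) τ := by
  have := (hasDerivAt_Cc τ).sub ((hasDerivAt_id τ).mul (hasDerivAt_Dfun τ))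
  exact this.congr_deriv (by rw [Dfun, Cc]; simp only [id_eq]; ring)

lemma tendsto_Wm_atTop : Tendsto Wm atTop (𝓝 0) := by
  have hub : ∀ᶠ τ in atTop, Wm τ ≤ gaussPDF τ := by
    filter_upwards [eventually_ge_atTop (1:ℝ)] with τ hτ
    have h1 : Cc τ ≤ gaussPDF τ / τ := Cc_le τ (by linarith)
    have : Wm τ = (1 + τ^2) * Cc τ - τ * gaussPDF τ := by rw [Wm, Dfun]; ring
    rw [this]
    have h2 : (1 + τ^2) * Cc τ ≤ (1 + τ^2) * (gaussPDF τ / τ) := by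
      apply mul_le_mul_of_nonneg_left h1 (by positivity)
    have h3 : (1 + τ^2) * (gaussPDF τ / τ) - τ * gaussPDF τ = gaussPDF τ / τ := by
      field_simp; ring
    have h5 : gaussPDF τ / τ ≤ gaussPDF τ := div_le_self (gaussPDF_pos τ).le hτ
    linarith
  have hlb : ∀ᶠ τ in atTop, -(τ * gaussPDF τ) ≤ Wm τ := by
    filter_upwards [eventually_ge_atTop (0:ℝ)] with τ hτ
    have : Wm τ = (1 + τ^2) * Cc τ - τ * gaussPDF τ := by rw [Wm, Dfun]; ring
    rw [this]
    nlinarith [Cc_pos τ, sq_nonneg τ]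
  have htop : Tendsto (fun τ => τ * gaussPDF τ) atTop (𝓝 0) := by
    have hb : ∀ᶠ τ in atTop, τ * gaussPDF τ ≤ 16 / τ^3 := by
      filter_upwards [eventually_ge_atTop (1:ℝ)] with τ hτ
      have h0 : (0:ℝ) < τ := by linarith
      have h1 : τ^2/4 ≤ Real.exp (τ^2/4) := (Real.add_one_le_exp _).trans' (by nlinarith)
      have h2 : Real.exp (τ^2/2) = (Real.exp (τ^2/4))^2 := by
        rw [← Real.exp_nat_mul]; norm_num; ring_nf
      have h3 : τ^4/16 ≤ Real.exp (τ^2/2) := by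
        rw [h2]; nlinarith [sq_nonneg (τ^2/4), Real.exp_pos (τ^2/4)]
      have h4 : gaussPDF τ ≤ 16 / τ^4 := by
        have hs : (1:ℝ) ≤ Real.sqrt (2 * Real.pi) := by
          rw [show (1:ℝ) = Real.sqrt 1 by simp]
          apply Real.sqrt_le_sqrt; nlinarith [Real.pi_gt_three]
        have he : Real.exp (-τ^2/2) ≤ 16/τ^4 := by
          rw [show -τ^2/2 = -(τ^2/2) by ring, Real.exp_neg]
          have h7 : (0:ℝ) < τ^4/16 := by positivity
          calc (Real.exp (τ^2/2))⁻¹ ≤ (τ^4/16)⁻¹ := by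
                apply inv_anti₀ h7 h3
            _ = 16/τ^4 := by field_simp
        calc gaussPDF τ ≤ Real.exp (-τ^2/2) := by
              rw [gaussPDF]
              exact div_le_self (Real.exp_pos _).le hs
          _ ≤ 16/τ^4 := he
      calc τ * gaussPDF τ ≤ τ * (16/τ^4) := by nlinarith [gaussPDF_pos τ]
        _ = 16/τ^3 := by field_simp
    have hc : Tendsto (fun τ : ℝ => 16 / τ^3) atTop (𝓝 (0:ℝ)) :=
      Tendsto.div_atTop (tendsto_const_nhds : Tendsto (fun _ : ℝ => (16:ℝ)) atTop (𝓝 16))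
        (tendsto_pow_atTop (by norm_num))
    apply tendsto_of_tendsto_of_tendsto_of_le_of_le' tendsto_const_nhds hc
    · filter_upwards [eventually_ge_atTop (0:ℝ)] with τ hτ
      nlinarith [gaussPDF_pos τ]
    · exact hb
  have hneg : Tendsto (fun τ => -(τ * gaussPDF τ)) atTop (𝓝 (0:ℝ)) := by
    have := htop.neg; rwa [neg_zero] at this
  exact tendsto_of_tendsto_of_tendsto_of_le_of_le' hneg tendsto_gaussPDF_atTop hlb hub

lemma Wm_pos (τ : ℝ) (hτ : 0 ≤ τ) : 0 < Wm τ := by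
  have hanti : StrictAnti Wm := by
    apply strictAnti_of_deriv_neg
    intro x
    rw [(hasDerivAt_Wm x).deriv]
    nlinarith [Dfun_pos x]
  have h1 : (0:ℝ) ≤ Wm (τ + 1) := by
    apply le_of_tendsto tendsto_Wm_atTop
    filter_upwards [eventually_ge_atTop (τ+1)] with x hx
    exact (hanti.antitone hx)
  have := hanti (show τ < τ + 1 by linarith)
  linarith

lemma mills (τ : ℝ) (hτ : 0 ≤ τ) : τ * Dfun τ < Cc τ := by
  have := Wm_pos τ hτ; rw [Wm] at this; linarith



noncomputable def Nfun (a τ : ℝ) : ℝ :=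
  2*gaussPDF τ - gaussPDF (a-τ) - gaussPDF (a+τ)
    + τ*(Phi0 (a-τ) - Phi0 (a+τ) + 2*Phi0 τ)

noncomputable def Npr (a τ : ℝ) : ℝ :=
  a*(gaussPDF (a+τ) - gaussPDF (a-τ)) + Phi0 (a-τ) - Phi0 (a+τ) + 2*Phi0 τ

lemma continuous_aux (τ : ℝ) : Continuous (fun w : ℝ => |w| * gaussPDF (w - τ)) :=
  continuous_abs.mul (continuous_gaussPDF.comp (continuous_id.sub continuous_const))

lemma N_eq (a τ : ℝ) (ha : 0 ≤ a) :
    (∫ w in (-a)..a, |w| * gaussPDF (w - τ)) = Nfun a τ := by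
  have hii : ∀ c d : ℝ, IntervalIntegrable (fun w => |w| * gaussPDF (w - τ)) volume c d :=
    fun c d => (continuous_aux τ).intervalIntegrable c d
  rw [← intervalIntegral.integral_add_adjacent_intervals (a := -a) (b := 0) (c := a)
    (hii _ _) (hii _ _)]
  have h1 : (∫ w in (-a)..(0:ℝ), |w| * gaussPDF (w - τ))
      = ∫ w in (-a)..(0:ℝ), -w * gaussPDF (w - τ) := by
    apply intervalIntegral.integral_congr
    intro w hw
    rw [Set.uIcc_of_le (by linarith : -a ≤ 0)] at hw
    show |w| * gaussPDF (w - τ) = -w * gaussPDF (w - τ)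
    rw [abs_of_nonpos hw.2]
  have h2 : (∫ w in (0:ℝ)..a, |w| * gaussPDF (w - τ))
      = ∫ w in (0:ℝ)..a, w * gaussPDF (w - τ) := by
    apply intervalIntegral.integral_congr
    intro w hw
    rw [Set.uIcc_of_le ha] at hw
    show |w| * gaussPDF (w - τ) = w * gaussPDF (w - τ)
    rw [abs_of_nonneg hw.1]
  have hd2 : ∀ w : ℝ, HasDerivAt (fun w => gaussPDF (w - τ) - τ * Phi0 (w - τ))
      (-w * gaussPDF (w - τ)) w := by
    intro w
    have hg : HasDerivAt (fun w : ℝ => gaussPDF (w - τ)) (-(w - τ) * gaussPDF (w - τ)) w := by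
      have := (hasDerivAt_gaussPDF (w - τ)).comp w ((hasDerivAt_id w).sub_const τ)
      simpa [Function.comp_def] using this
    have hp : HasDerivAt (fun w : ℝ => Phi0 (w - τ)) (gaussPDF (w - τ)) w := by
      have := (hasDerivAt_Phi0 (w - τ)).comp w ((hasDerivAt_id w).sub_const τ)
      simpa [Function.comp_def] using this
    exact (hg.sub (hp.const_mul τ)).congr_deriv (by ring)
  have hd1 : ∀ w : ℝ, HasDerivAt (fun w => -gaussPDF (w - τ) + τ * Phi0 (w - τ))
      (w * gaussPDF (w - τ)) w := by
    intro w
    have hg : HasDerivAt (fun w : ℝ => gaussPDF (w - τ)) (-(w - τ) * gaussPDF (w - τ)) w := by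
      have := (hasDerivAt_gaussPDF (w - τ)).comp w ((hasDerivAt_id w).sub_const τ)
      simpa [Function.comp_def] using this
    have hp : HasDerivAt (fun w : ℝ => Phi0 (w - τ)) (gaussPDF (w - τ)) w := by
      have := (hasDerivAt_Phi0 (w - τ)).comp w ((hasDerivAt_id w).sub_const τ)
      simpa [Function.comp_def] using this
    exact (hg.neg.add (hp.const_mul τ)).congr_deriv (by ring)
  rw [h1, h2]
  rw [intervalIntegral.integral_eq_sub_of_hasDerivAt (fun w _ => hd2 w)
    (((continuous_id.neg.mul (continuous_gaussPDF.comp (by fun_prop)))).intervalIntegrable _ _)]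
  rw [intervalIntegral.integral_eq_sub_of_hasDerivAt (fun w _ => hd1 w)
    (((continuous_id.mul (continuous_gaussPDF.comp (by fun_prop)))).intervalIntegrable _ _)]
  rw [Nfun]
  rw [show (0:ℝ) - τ = -τ by ring, show -a - τ = -(a+τ) by ring]
  rw [gaussPDF_neg', Phi0_neg, gaussPDF_neg', Phi0_neg]
  ring

lemma hasDerivAt_gauss_c_sub (c τ : ℝ) :
    HasDerivAt (fun τ : ℝ => gaussPDF (c - τ)) ((c - τ) * gaussPDF (c - τ)) τ := by
  have := (hasDerivAt_gaussPDF (c - τ)).comp τ ((hasDerivAt_const τ c).sub (hasDerivAt_id τ))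
  simpa [Function.comp_def] using this.congr_deriv (by simp; ring)

lemma hasDerivAt_gauss_c_add (c τ : ℝ) :
    HasDerivAt (fun τ : ℝ => gaussPDF (c + τ)) (-(c + τ) * gaussPDF (c + τ)) τ := by
  have := (hasDerivAt_gaussPDF (c + τ)).comp τ ((hasDerivAt_const τ c).add (hasDerivAt_id τ))
  simpa [Function.comp_def] using this.congr_deriv (by simp)

lemma hasDerivAt_Phi0_c_sub (c τ : ℝ) :
    HasDerivAt (fun τ : ℝ => Phi0 (c - τ)) (-gaussPDF (c - τ)) τ := by
  have := (hasDerivAt_Phi0 (c - τ)).comp τ ((hasDerivAt_const τ c).sub (hasDerivAt_id τ))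
  simpa [Function.comp_def] using this.congr_deriv (by simp)

lemma hasDerivAt_Phi0_c_add (c τ : ℝ) :
    HasDerivAt (fun τ : ℝ => Phi0 (c + τ)) (gaussPDF (c + τ)) τ := by
  have := (hasDerivAt_Phi0 (c + τ)).comp τ ((hasDerivAt_const τ c).add (hasDerivAt_id τ))
  simpa [Function.comp_def] using this.congr_deriv (by simp)

lemma hasDerivAt_Nfun_tau (a τ : ℝ) :
    HasDerivAt (fun τ => Nfun a τ) (Npr a τ) τ := by
  unfold Nfun Npr
  have h1 := (hasDerivAt_gaussPDF τ).const_mul 2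
  have h2 := hasDerivAt_gauss_c_sub a τ
  have h3 := hasDerivAt_gauss_c_add a τ
  have h4 := ((hasDerivAt_Phi0_c_sub a τ).sub (hasDerivAt_Phi0_c_add a τ)).add
    ((hasDerivAt_Phi0 τ).const_mul 2)
  have h5 := (hasDerivAt_id τ).mul h4
  have := ((h1.sub h2).sub h3).add h5
  exact this.congr_deriv (by simp only [id_eq, Pi.add_apply, Pi.sub_apply, Pi.mul_apply]; ring)

-- derivative in a
lemma hasDerivAt_Nfun_a (a τ : ℝ) :
    HasDerivAt (fun a => Nfun a τ) (a * (gaussPDF (a-τ) + gaussPDF (a+τ))) a := by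
  unfold Nfun
  have h2 : HasDerivAt (fun a : ℝ => gaussPDF (a - τ)) (-(a - τ) * gaussPDF (a - τ)) a := by
    have := (hasDerivAt_gaussPDF (a - τ)).comp a ((hasDerivAt_id a).sub_const τ)
    simpa [Function.comp_def] using this
  have h3 : HasDerivAt (fun a : ℝ => gaussPDF (a + τ)) (-(a + τ) * gaussPDF (a + τ)) a := by
    have := (hasDerivAt_gaussPDF (a + τ)).comp a ((hasDerivAt_id a).add_const τ)
    simpa [Function.comp_def] using this
  have h4 : HasDerivAt (fun a : ℝ => Phi0 (a - τ)) (gaussPDF (a - τ)) a := by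
    have := (hasDerivAt_Phi0 (a - τ)).comp a ((hasDerivAt_id a).sub_const τ)
    simpa [Function.comp_def] using this
  have h5 : HasDerivAt (fun a : ℝ => Phi0 (a + τ)) (gaussPDF (a + τ)) a := by
    have := (hasDerivAt_Phi0 (a + τ)).comp a ((hasDerivAt_id a).add_const τ)
    simpa [Function.comp_def] using this
  have h6 := ((h4.sub h5).add (hasDerivAt_const a (2 * Phi0 τ))).const_mul τ
  have := (((hasDerivAt_const a (2*gaussPDF τ)).sub h2).sub h3).add h6
  exact this.congr_deriv (by ring)

lemma hasDerivAt_Npr_a (a τ : ℝ) :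
    HasDerivAt (fun a => Npr a τ)
      (a * ((a-τ) * gaussPDF (a-τ) - (a+τ) * gaussPDF (a+τ))) a := by
  unfold Npr
  have h2 : HasDerivAt (fun a : ℝ => gaussPDF (a - τ)) (-(a - τ) * gaussPDF (a - τ)) a := by
    have := (hasDerivAt_gaussPDF (a - τ)).comp a ((hasDerivAt_id a).sub_const τ)
    simpa [Function.comp_def] using this
  have h3 : HasDerivAt (fun a : ℝ => gaussPDF (a + τ)) (-(a + τ) * gaussPDF (a + τ)) a := by
    have := (hasDerivAt_gaussPDF (a + τ)).comp a ((hasDerivAt_id a).add_const τ)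
    simpa [Function.comp_def] using this
  have h4 : HasDerivAt (fun a : ℝ => Phi0 (a - τ)) (gaussPDF (a - τ)) a := by
    have := (hasDerivAt_Phi0 (a - τ)).comp a ((hasDerivAt_id a).sub_const τ)
    simpa [Function.comp_def] using this
  have h5 : HasDerivAt (fun a : ℝ => Phi0 (a + τ)) (gaussPDF (a + τ)) a := by
    have := (hasDerivAt_Phi0 (a + τ)).comp a ((hasDerivAt_id a).add_const τ)
    simpa [Function.comp_def] using this
  have h6 := (hasDerivAt_id a).mul (h3.sub h2)
  have := ((h6.add h4).sub h5).add (hasDerivAt_const a (2 * Phi0 τ))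
  exact this.congr_deriv (by simp only [id_eq, Pi.add_apply, Pi.sub_apply, Pi.mul_apply]; ring)

lemma gauss_sub_le (a τ : ℝ) (ha : 0 ≤ a) (hτ : 0 ≤ τ) :
    gaussPDF (a + τ) ≤ gaussPDF (a - τ) := by
  unfold gaussPDF
  have hs : 0 < Real.sqrt (2 * Real.pi) := Real.sqrt_pos.2 (by positivity)
  have h := Real.exp_le_exp.2 (show -(a+τ)^2/2 ≤ -(a-τ)^2/2 by nlinarith [mul_nonneg ha hτ])
  exact div_le_div_of_nonneg_right h hs.le

noncomputable def Ffun (τ a : ℝ) : ℝ := Dfun τ * Npr a τ + Cc τ * Nfun a τ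

lemma Ffun_zero (τ : ℝ) : Ffun τ 0 = 0 := by
  have h1 : Nfun 0 τ = 0 := by
    unfold Nfun
    rw [show (0:ℝ) - τ = -τ by ring, show (0:ℝ) + τ = τ by ring, gaussPDF_neg', Phi0_neg]
    ring
  have h2 : Npr 0 τ = 0 := by
    unfold Npr
    rw [show (0:ℝ) - τ = -τ by ring, show (0:ℝ) + τ = τ by ring, Phi0_neg]
    ring
  rw [Ffun, h1, h2]; ring

lemma Ffun_deriv_pos (τ a : ℝ) (hτ : 0 ≤ τ) (ha : 0 < a) :
    0 < Dfun τ * (a * ((a-τ) * gaussPDF (a-τ) - (a+τ) * gaussPDF (a+τ)))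
      + Cc τ * (a * (gaussPDF (a-τ) + gaussPDF (a+τ))) := by
  have hD := Dfun_pos τ
  have hC := Cc_pos τ
  have hM := mills τ hτ
  have hg := gauss_sub_le a τ ha.le hτ
  have hg1 := gaussPDF_pos (a - τ)
  have hg2 := gaussPDF_pos (a + τ)
  have key : 0 < gaussPDF (a-τ) * (Dfun τ * (a-τ) + Cc τ)
      + gaussPDF (a+τ) * (Cc τ - Dfun τ * (a+τ)) := by
    have hX : 0 < Dfun τ * (a-τ) + Cc τ := by nlinarith
    rcases le_or_gt 0 (Cc τ - Dfun τ * (a+τ)) with hY | hY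
    · nlinarith
    · nlinarith [mul_le_mul_of_nonneg_right hg hX.le]
  nlinarith

lemma Ffun_pos (τ a : ℝ) (hτ : 0 ≤ τ) (ha : 0 < a) : 0 < Ffun τ a := by
  have hmono : StrictMonoOn (Ffun τ) (Set.Ici 0) := by
    apply strictMonoOn_of_deriv_pos (convex_Ici 0)
    · apply Continuous.continuousOn
      have : ∀ x, HasDerivAt (Ffun τ) (Dfun τ * (x * ((x-τ) * gaussPDF (x-τ) - (x+τ) * gaussPDF (x+τ)))
          + Cc τ * (x * (gaussPDF (x-τ) + gaussPDF (x+τ)))) x := by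
        intro x
        exact ((hasDerivAt_Npr_a x τ).const_mul (Dfun τ)).add
          ((hasDerivAt_Nfun_a x τ).const_mul (Cc τ))
      exact Differentiable.continuous (fun x => (this x).differentiableAt)
    · intro x hx
      rw [interior_Ici] at hx
      have hd : HasDerivAt (Ffun τ) (Dfun τ * (x * ((x-τ) * gaussPDF (x-τ) - (x+τ) * gaussPDF (x+τ)))
          + Cc τ * (x * (gaussPDF (x-τ) + gaussPDF (x+τ)))) x :=
        ((hasDerivAt_Npr_a x τ).const_mul (Dfun τ)).add
          ((hasDerivAt_Nfun_a x τ).const_mul (Cc τ))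
      rw [hd.deriv]
      exact Ffun_deriv_pos τ x hτ hx
  have := hmono (Set.self_mem_Ici) (Set.mem_Ici.2 ha.le) ha
  rwa [Ffun_zero] at this




attribute [fun_prop] continuous_gaussPDF continuous_Phi0

lemma continuous_Nfun_abs (τ : ℝ) : Continuous (fun m : ℝ => Nfun |m| τ) := by
  unfold Nfun; fun_prop

lemma continuous_Npr_abs (τ : ℝ) : Continuous (fun m : ℝ => Npr |m| τ) := by
  unfold Npr; fun_prop

lemma bound_Nfun (a τ : ℝ) : |Nfun a τ| ≤ 4 + 4 * |τ| * (∫ t, gaussPDF t) := by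
  set I := ∫ t, gaussPDF t with hI
  have hp1 := abs_Phi0_le (a - τ)
  have hp2 := abs_Phi0_le (a + τ)
  have hp3 := abs_Phi0_le τ
  have hg1 := gaussPDF_pos τ; have hg2 := gaussPDF_pos (a-τ); have hg3 := gaussPDF_pos (a+τ)
  have hl1 := gaussPDF_le_one τ; have hl2 := gaussPDF_le_one (a-τ); have hl3 := gaussPDF_le_one (a+τ)
  have hIP : 0 ≤ I := le_trans (abs_nonneg _) hp3
  have h1 : |Nfun a τ| ≤ |2*gaussPDF τ - gaussPDF (a-τ) - gaussPDF (a+τ)|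
      + |τ| * |Phi0 (a-τ) - Phi0 (a+τ) + 2*Phi0 τ| := by
    rw [Nfun]
    calc |2*gaussPDF τ - gaussPDF (a-τ) - gaussPDF (a+τ)
        + τ*(Phi0 (a-τ) - Phi0 (a+τ) + 2*Phi0 τ)|
        ≤ |2*gaussPDF τ - gaussPDF (a-τ) - gaussPDF (a+τ)|
          + |τ*(Phi0 (a-τ) - Phi0 (a+τ) + 2*Phi0 τ)| := abs_add_le _ _
      _ = _ := by rw [abs_mul]
  have h2 : |2*gaussPDF τ - gaussPDF (a-τ) - gaussPDF (a+τ)| ≤ 4 := by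
    rw [abs_le]; constructor <;> nlinarith
  have h3 : |Phi0 (a-τ) - Phi0 (a+τ) + 2*Phi0 τ| ≤ 4 * I := by
    calc |Phi0 (a-τ) - Phi0 (a+τ) + 2*Phi0 τ|
        ≤ |Phi0 (a-τ) - Phi0 (a+τ)| + |2*Phi0 τ| := abs_add_le _ _
      _ ≤ (|Phi0 (a-τ)| + |Phi0 (a+τ)|) + 2 * |Phi0 τ| := by
          rw [abs_mul]
          have h2' : |(2:ℝ)| = 2 := by norm_num
          rw [h2']
          gcongr
          exact abs_sub _ _
      _ ≤ 4 * I := by linarith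
  calc |Nfun a τ| ≤ |2*gaussPDF τ - gaussPDF (a-τ) - gaussPDF (a+τ)|
        + |τ| * |Phi0 (a-τ) - Phi0 (a+τ) + 2*Phi0 τ| := h1
    _ ≤ 4 + |τ| * (4 * I) := by gcongr
    _ = 4 + 4 * |τ| * I := by ring

lemma bound_Npr (a τ : ℝ) : |Npr a τ| ≤ 2 * |a| + 4 * (∫ t, gaussPDF t) := by
  set I := ∫ t, gaussPDF t with hI
  have hp1 := abs_Phi0_le (a - τ)
  have hp2 := abs_Phi0_le (a + τ)
  have hp3 := abs_Phi0_le τ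
  have hg2 := gaussPDF_pos (a-τ); have hg3 := gaussPDF_pos (a+τ)
  have hl2 := gaussPDF_le_one (a-τ); have hl3 := gaussPDF_le_one (a+τ)
  have h1 : |Npr a τ| ≤ |a| * |gaussPDF (a+τ) - gaussPDF (a-τ)|
      + |Phi0 (a-τ)| + |Phi0 (a+τ)| + 2 * |Phi0 τ| := by
    rw [Npr]
    calc |a*(gaussPDF (a+τ) - gaussPDF (a-τ)) + Phi0 (a-τ) - Phi0 (a+τ) + 2*Phi0 τ|
        ≤ |a*(gaussPDF (a+τ) - gaussPDF (a-τ)) + Phi0 (a-τ) - Phi0 (a+τ)| + |2*Phi0 τ| :=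
          abs_add_le _ _
      _ ≤ (|a*(gaussPDF (a+τ) - gaussPDF (a-τ)) + Phi0 (a-τ)| + |Phi0 (a+τ)|) + |2*Phi0 τ| :=
          add_le_add_left (abs_sub _ _) _
      _ ≤ ((|a*(gaussPDF (a+τ) - gaussPDF (a-τ))| + |Phi0 (a-τ)|) + |Phi0 (a+τ)|) + |2*Phi0 τ| :=
          add_le_add_left (add_le_add_left (abs_add_le _ _) _) _
      _ = _ := by
          rw [abs_mul, abs_mul]
          have h2' : |(2:ℝ)| = 2 := by norm_num
          rw [h2']; try ring
  have h2 : |gaussPDF (a+τ) - gaussPDF (a-τ)| ≤ 2 := by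
    rw [abs_le]; constructor <;> nlinarith
  calc |Npr a τ| ≤ |a| * |gaussPDF (a+τ) - gaussPDF (a-τ)|
        + |Phi0 (a-τ)| + |Phi0 (a+τ)| + 2 * |Phi0 τ| := h1
    _ ≤ |a| * 2 + I + I + 2 * I := by gcongr
    _ = 2 * |a| + 4 * I := by ring

section main
variable (G : Measure ℝ) [IsProbabilityMeasure G]

noncomputable def NumG (τ : ℝ) : ℝ := ∫ m, Nfun |m| τ ∂G

lemma integrable_Nfun (τ : ℝ) : Integrable (fun m => Nfun |m| τ) G := by
  apply Integrable.mono' (integrable_const (4 + 4 * |τ| * (∫ t, gaussPDF t)))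
    (continuous_Nfun_abs τ).aestronglyMeasurable
  filter_upwards with m
  rw [Real.norm_eq_abs]
  exact bound_Nfun _ _

lemma hasDerivAt_NumX (hG : Integrable (fun m => m ^ 2) G) (τ : ℝ) :
    Integrable (fun m => Npr |m| τ) G ∧
    HasDerivAt (NumG G) (∫ m, Npr |m| τ ∂G) τ := by
  have hbi : Integrable (fun m : ℝ => 2 * |m| + 4 * (∫ t, gaussPDF t)) G := by
    apply Integrable.add _ (integrable_const _)
    apply Integrable.const_mul
    apply Integrable.mono' (show Integrable (fun m : ℝ => 1 + m^2) G from (integrable_const _).add hG)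
      (continuous_abs.aestronglyMeasurable)
    filter_upwards with m
    rw [Real.norm_eq_abs, abs_abs]
    nlinarith [sq_nonneg (|m| - 1), sq_abs m]
  exact hasDerivAt_integral_of_dominated_loc_of_deriv_le (s := Metric.ball τ 1) (Metric.ball_mem_nhds τ one_pos)
    (Filter.Eventually.of_forall (fun τ' => (continuous_Nfun_abs τ').aestronglyMeasurable))
    (integrable_Nfun G τ)
    ((continuous_Npr_abs τ).aestronglyMeasurable)
    (Filter.Eventually.of_forall (fun m τ' _ => by
      rw [Real.norm_eq_abs]
      simpa [abs_abs] using bound_Npr |m| τ'))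
    hbi
    (Filter.Eventually.of_forall (fun m τ' _ => hasDerivAt_Nfun_tau |m| τ'))

lemma Rratio_eq : Rratio G = fun τ => NumG G τ / Dfun τ := by
  funext τ
  rw [Rratio, NumG, D_eq]
  congr 1
  apply MeasureTheory.integral_congr_ae
  filter_upwards with m
  exact N_eq |m| τ (abs_nonneg m)

lemma Num_comb_pos (hG : Integrable (fun m => m ^ 2) G) (hne : 0 < G {m : ℝ | m ≠ 0})
    (τ : ℝ) (hτ : 0 ≤ τ) :
    0 < Dfun τ * (∫ m, Npr |m| τ ∂G) + Cc τ * NumG G τ := by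
  have hi1 := (hasDerivAt_NumX G hG τ).1
  have hi2 := integrable_Nfun G τ
  have heq : Dfun τ * (∫ m, Npr |m| τ ∂G) + Cc τ * NumG G τ = ∫ m, Ffun τ |m| ∂G := by
    rw [NumG, ← MeasureTheory.integral_const_mul, ← MeasureTheory.integral_const_mul, ← MeasureTheory.integral_add
      (hi1.const_mul _) (hi2.const_mul _)]
    rfl
  rw [heq]
  have hint : Integrable (fun m => Ffun τ |m|) G := by
    have := (hi1.const_mul (Dfun τ)).add (hi2.const_mul (Cc τ))
    exact this.congr (by filter_upwards with m; rfl)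
  have hnn : ∀ m : ℝ, 0 ≤ Ffun τ |m| := by
    intro m
    rcases eq_or_ne m 0 with rfl | hm
    · simp [Ffun_zero]
    · exact (Ffun_pos τ |m| hτ (abs_pos.2 hm)).le
  rcases lt_or_eq_of_le (integral_nonneg (show (0 : ℝ → ℝ) ≤ fun m => Ffun τ |m| from hnn) (μ := G)) with h | h
  · exact h
  · exfalso
    have hae := (integral_eq_zero_iff_of_nonneg (fun m => hnn m) hint).1 h.symm
    have hsub : {m : ℝ | m ≠ 0} ⊆ {m : ℝ | ¬ Ffun τ |m| = 0} := by
      intro m hm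
      exact (Ffun_pos τ |m| hτ (abs_pos.2 hm)).ne'
    have : G {m : ℝ | m ≠ 0} = 0 :=
      measure_mono_null hsub (by simpa [Filter.EventuallyEq, ae_iff] using hae)
    exact absurd this hne.ne'

end main

/-- if `P(μ ≠ 0) > 0`, then `R(·; G)` is strictly increasing on `[0, ∞)`,
with strictly positive derivative at every `τ ≥ 0`. -/
theorem Rratio_strictMono (G : Measure ℝ) [IsProbabilityMeasure G]
    (hG : Integrable (fun m => m ^ 2) G) (hne : 0 < G {m : ℝ | m ≠ 0}) :
    StrictMonoOn (Rratio G) (Set.Ici 0) ∧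
      ∀ τ : ℝ, 0 ≤ τ → 0 < deriv (Rratio G) τ := by
  have hR : ∀ τ : ℝ, HasDerivAt (Rratio G)
      (((∫ m, Npr |m| τ ∂G) * Dfun τ - NumG G τ * (-Cc τ)) / (Dfun τ)^2) τ := by
    intro τ
    rw [Rratio_eq]
    exact ((hasDerivAt_NumX G hG τ).2.div (hasDerivAt_Dfun τ) (Dfun_pos τ).ne')
  have hpos : ∀ τ : ℝ, 0 ≤ τ → 0 < deriv (Rratio G) τ := by
    intro τ hτ
    rw [(hR τ).deriv]
    apply div_pos
    · have := Num_comb_pos G hG hne τ hτ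
      nlinarith
    · have := Dfun_pos τ; positivity
  refine ⟨?_, hpos⟩
  apply strictMonoOn_of_deriv_pos (convex_Ici 0)
  · exact (Differentiable.continuous (fun τ => (hR τ).differentiableAt)).continuousOn
  · intro x hx
    rw [interior_Ici] at hx
    exact hpos x hx.le
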